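/- arXiv:2007.02011 — 5 statements merged into one kernel-verified Lean document; each statement's English description precedes it below -/
import Mathlib

section
/- Let n be an even positive integer and let S ⊆ [n]. Suppose that there is at most one unordered pair {i, n+1−i} (i ∈ [n]) with {i, n+1−i} ⊆ S, and at most one unordered pair {i, n+1−i} with {i, n+1−i} ∩ S = ∅. Then S and S* are weakly separated. -/
open Finset

/-- The K-involution on subsets of `[n] = {1,…,n}`:
`A* = {i ∈ [n] : n+1−i ∉ A}`. -/
def KInv (n : ℕ) (A : Finset ℕ) : Finset ℕ :=
  (Finset.Icc 1 n).filter (fun i => n + 1 - i ∉ A)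

/-- `A` surrounds `B` (requires `B − A ≠ ∅`):
`min(A−B) < min(B−A)` and `max(A−B) > max(B−A)`,
with the conventions `min ∅ = ⊤` and `max ∅ = ⊥`. -/
def Surrounds (A B : Finset ℕ) : Prop :=
  (B \ A).Nonempty ∧ (A \ B).min < (B \ A).min ∧ (B \ A).max < (A \ B).max

/-- `A` and `B` are chord separated: there are no `i<j<k<l` with `i,k` in one
of `A−B`, `B−A` and `j,l` in the other. -/
def ChordSep (A B : Finset ℕ) : Prop :=
  ¬ ∃ i j k l : ℕ, i < j ∧ j < k ∧ k < l ∧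
    ((i ∈ A \ B ∧ k ∈ A \ B ∧ j ∈ B \ A ∧ l ∈ B \ A) ∨
     (i ∈ B \ A ∧ k ∈ B \ A ∧ j ∈ A \ B ∧ l ∈ A \ B))

/-- `A` and `B` are strongly separated: there are no `i<j<k` with `i,k` in one
of `A−B`, `B−A` and `j` in the other. -/
def StrongSep (A B : Finset ℕ) : Prop :=
  ¬ ∃ i j k : ℕ, i < j ∧ j < k ∧
    ((i ∈ A \ B ∧ k ∈ A \ B ∧ j ∈ B \ A) ∨
     (i ∈ B \ A ∧ k ∈ B \ A ∧ j ∈ A \ B))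

/-- `A` and `B` are weakly separated: chord separated, `|A| ≤ |B|` whenever
`A` surrounds `B`, and `|B| ≤ |A|` whenever `B` surrounds `A`. -/
def WeakSep (A B : Finset ℕ) : Prop :=
  ChordSep A B ∧ (Surrounds A B → A.card ≤ B.card) ∧
    (Surrounds B A → B.card ≤ A.card)

/-- For even `n`, if `S ⊆ [n]` has at most one full symmetric pair
`{i, n+1−i} ⊆ S` and at most one poor symmetric pair `{i, n+1−i} ∩ S = ∅`,
then `S` and `S*` are weakly separated. -/
theorem weakSep_self_of_few_pairs
    (n : ℕ) (hn : 0 < n) (hev : Even n)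
    (S : Finset ℕ) (hS : S ⊆ Finset.Icc 1 n)
    (hfull : ∀ i ∈ Finset.Icc 1 n, ∀ j ∈ Finset.Icc 1 n,
      i ∈ S → n + 1 - i ∈ S → j ∈ S → n + 1 - j ∈ S → (j = i ∨ j = n + 1 - i))
    (hpoor : ∀ i ∈ Finset.Icc 1 n, ∀ j ∈ Finset.Icc 1 n,
      i ∉ S → n + 1 - i ∉ S → j ∉ S → n + 1 - j ∉ S → (j = i ∨ j = n + 1 - i)) :
    WeakSep S (KInv n S) := by
  classical
  set T : Finset ℕ := (Finset.Icc 1 n).filter (fun i => n + 1 - i ∈ S) with hT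
  have hIcc : ∀ i ∈ S, 1 ≤ i ∧ i ≤ n := by
    intro i hi
    have := hS hi
    simpa [Finset.mem_Icc] using this
  have memX : ∀ i, i ∈ S \ KInv n S ↔ (i ∈ S ∧ n + 1 - i ∈ S) := by
    intro i
    simp only [Finset.mem_sdiff, KInv, Finset.mem_filter, not_and, not_not]
    constructor
    · rintro ⟨hi, h⟩; exact ⟨hi, h (hS hi)⟩
    · rintro ⟨hi, h⟩; exact ⟨hi, fun _ => h⟩
  have memY : ∀ i, i ∈ KInv n S \ S ↔
      (i ∈ Finset.Icc 1 n ∧ i ∉ S ∧ n + 1 - i ∉ S) := by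
    intro i
    simp only [Finset.mem_sdiff, KInv, Finset.mem_filter]
    tauto
  have hXpair : ∀ i ∈ S \ KInv n S, ∀ k ∈ S \ KInv n S, k = i ∨ k = n + 1 - i := by
    intro i hi k hk
    rw [memX] at hi hk
    exact hfull i (hS hi.1) k (hS hk.1) hi.1 hi.2 hk.1 hk.2
  have hYpair : ∀ i ∈ KInv n S \ S, ∀ k ∈ KInv n S \ S, k = i ∨ k = n + 1 - i := by
    intro i hi k hk
    rw [memY] at hi hk
    exact hpoor i hi.1 k hk.1 hi.2.1 hi.2.2 hk.2.1 hk.2.2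
  have hXbd : ∀ i ∈ S \ KInv n S, 1 ≤ i ∧ i ≤ n := by
    intro i hi; rw [memX] at hi; exact hIcc i hi.1
  have hYbd : ∀ i ∈ KInv n S \ S, 1 ≤ i ∧ i ≤ n := by
    intro i hi; rw [memY] at hi; simpa [Finset.mem_Icc] using hi.1
  have hXsym : ∀ i ∈ S \ KInv n S, n + 1 - i ∈ S \ KInv n S := by
    intro i hi
    have hb := hXbd i hi
    rw [memX] at hi ⊢
    have : n + 1 - (n + 1 - i) = i := by omega
    rw [this]
    exact ⟨hi.2, hi.1⟩
  have hYsym : ∀ i ∈ KInv n S \ S, n + 1 - i ∈ KInv n S \ S := by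
    intro i hi
    have hb := hYbd i hi
    rw [memY] at hi ⊢
    have h1 : n + 1 - (n + 1 - i) = i := by omega
    have h2 : n + 1 - i ∈ Finset.Icc 1 n := by
      simp [Finset.mem_Icc]; omega
    rw [h1]
    exact ⟨h2, hi.2.2, hi.2.1⟩
  have hchord : ChordSep S (KInv n S) := by
    rintro ⟨i, j, k, l, hij, hjk, hkl, hcase⟩
    rcases hcase with ⟨hi, hk, hj, hl⟩ | ⟨hi, hk, hj, hl⟩
    · have h1 := hXpair i hi k hk
      have h2 := hYpair j hj l hl
      have b1 := hXbd i hi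
      have b2 := hYbd j hj
      omega
    · have h1 := hYpair i hi k hk
      have h2 := hXpair j hj l hl
      have b1 := hYbd i hi
      have b2 := hXbd j hj
      omega
  -- cardinalities
  have hTeq : T = S.image (fun i => n + 1 - i) := by
    ext x
    simp only [hT, Finset.mem_filter, Finset.mem_image, Finset.mem_Icc]
    constructor
    · rintro ⟨hx, hxs⟩
      exact ⟨n + 1 - x, hxs, by omega⟩
    · rintro ⟨a, ha, rfl⟩
      have hb := hIcc a ha
      constructor
      · omega
      · have : n + 1 - (n + 1 - a) = a := by omega
        rw [this]; exact ha
  have hTcard : T.card = S.card := by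
    rw [hTeq]
    apply Finset.card_image_of_injOn
    intro a ha b hb hab
    have hab' : n + 1 - a = n + 1 - b := hab
    have h1 := hIcc a ha
    have h2 := hIcc b hb
    omega
  have hKcard : (KInv n S).card = n - S.card := by
    have hKeq : KInv n S = Finset.Icc 1 n \ T := by
      rw [hT, KInv, Finset.filter_not]
    rw [hKeq, Finset.card_sdiff_of_subset (Finset.filter_subset _ _), hTcard]
    simp [Nat.card_Icc]
  have hXeq : S \ KInv n S = S ∩ T := by
    ext x
    rw [memX]
    simp only [hT, Finset.mem_inter, Finset.mem_filter]
    constructor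
    · rintro ⟨h1, h2⟩; exact ⟨h1, hS h1, h2⟩
    · tauto
  have hYeq : KInv n S \ S = Finset.Icc 1 n \ (S ∪ T) := by
    ext x
    rw [memY]
    simp only [hT, Finset.mem_sdiff, Finset.mem_union, Finset.mem_filter]
    tauto
  -- if both nonempty, cards are equal
  have hkey : (S \ KInv n S).Nonempty → (KInv n S \ S).Nonempty →
      S.card = (KInv n S).card := by
    rintro ⟨a, ha⟩ ⟨b, hb⟩
    have hab := hXbd a ha
    have hbb := hYbd b hb
    obtain ⟨m, hm⟩ := hev
    have haa : a ≠ n + 1 - a := by omega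
    have hbb' : b ≠ n + 1 - b := by omega
    have hX2 : (S \ KInv n S).card = 2 := by
      have : S \ KInv n S = {a, n + 1 - a} := by
        ext x
        simp only [Finset.mem_insert, Finset.mem_singleton]
        constructor
        · intro hx
          rcases hXpair a ha x hx with h | h
          · exact Or.inl h
          · exact Or.inr h
        · rintro (rfl | rfl)
          · exact ha
          · exact hXsym a ha
      rw [this, Finset.card_insert_of_notMem (by simpa using haa)]
      simp
    have hY2 : (KInv n S \ S).card = 2 := by
      have : KInv n S \ S = {b, n + 1 - b} := by
        ext x
        simp only [Finset.mem_insert, Finset.mem_singleton]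
        constructor
        · intro hx
          rcases hYpair b hb x hx with h | h
          · exact Or.inl h
          · exact Or.inr h
        · rintro (rfl | rfl)
          · exact hb
          · exact hYsym b hb
      rw [this, Finset.card_insert_of_notMem (by simpa using hbb')]
      simp
    have hunion : (S ∪ T).card = n - 2 + 2 - 2 := by
      have hsub : S ∪ T ⊆ Finset.Icc 1 n := by
        apply Finset.union_subset hS (Finset.filter_subset _ _)
      have hYc : (Finset.Icc 1 n \ (S ∪ T)).card = n - (S ∪ T).card := by
        rw [Finset.card_sdiff_of_subset hsub]
        simp [Nat.card_Icc]
      rw [hYeq] at hY2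
      have hle := Finset.card_le_card hsub
      simp [Nat.card_Icc] at hle
      omega
    have hinter : (S ∩ T).card = 2 := by rw [← hXeq]; exact hX2
    have hcui := Finset.card_union_add_card_inter S T
    have hn2 : 2 ≤ n := by omega
    rw [hKcard]
    omega
  refine ⟨hchord, ?_, ?_⟩
  · rintro ⟨hne, hmin, hmax⟩
    have hXne : (S \ KInv n S).Nonempty := by
      rcases Finset.eq_empty_or_nonempty (S \ KInv n S) with h | h
      · rw [h, Finset.min_empty] at hmin
        exact absurd hmin not_top_lt
      · exact h
    exact (hkey hXne hne).le
  · rintro ⟨hne, hmin, hmax⟩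
    have hYne : (KInv n S \ S).Nonempty := by
      rcases Finset.eq_empty_or_nonempty (KInv n S \ S) with h | h
      · rw [h, Finset.min_empty] at hmin
        exact absurd hmin not_top_lt
      · exact h
    exact (hkey hne hYne).ge
end

section
/- Let n be a positive integer and let S, T ⊆ [n] be weakly separated. Then S* and T* are weakly separated. -/
open Finset

lemma mem_kInv_sdiff {n : ℕ} {S T : Finset ℕ} {i : ℕ} :
    i ∈ KInv n S \ KInv n T ↔ (1 ≤ i ∧ i ≤ n) ∧ (n + 1 - i ∈ T ∧ n + 1 - i ∉ S) := by
  simp only [KInv, Finset.mem_sdiff, Finset.mem_filter, Finset.mem_Icc, not_and, not_not]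
  tauto

lemma refl_mem {n : ℕ} {S T : Finset ℕ} (hT : T ⊆ Finset.Icc 1 n) {x : ℕ}
    (hx : x ∈ T \ S) : n + 1 - x ∈ KInv n S \ KInv n T := by
  rw [Finset.mem_sdiff] at hx
  have hb := Finset.mem_Icc.mp (hT hx.1)
  rw [mem_kInv_sdiff]
  have h : n + 1 - (n + 1 - x) = x := by omega
  rw [h]
  exact ⟨⟨by omega, by omega⟩, hx.1, hx.2⟩

lemma card_kInv {n : ℕ} {S : Finset ℕ} (hS : S ⊆ Finset.Icc 1 n) :
    (KInv n S).card = n - S.card := by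
  have h1 : (Finset.Icc 1 n).filter (fun i => n + 1 - i ∈ S) = S.image (fun j => n + 1 - j) := by
    ext i
    simp only [Finset.mem_filter, Finset.mem_Icc, Finset.mem_image]
    constructor
    · rintro ⟨⟨h1, h2⟩, hmem⟩
      exact ⟨n + 1 - i, hmem, by omega⟩
    · rintro ⟨j, hj, rfl⟩
      have hb := Finset.mem_Icc.mp (hS hj)
      refine ⟨⟨by omega, by omega⟩, ?_⟩
      have : n + 1 - (n + 1 - j) = j := by omega
      rw [this]; exact hj
  have h2 : ((Finset.Icc 1 n).filter (fun i => n + 1 - i ∈ S)).card = S.card := by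
    rw [h1]
    apply Finset.card_image_of_injOn
    intro a ha b hb hab
    have h1 := Finset.mem_Icc.mp (hS ha)
    have h2 := Finset.mem_Icc.mp (hS hb)
    simp only at hab
    omega
  have h3 := Finset.card_filter_add_card_filter_not
    (s := Finset.Icc 1 n) (p := fun i => n + 1 - i ∈ S)
  have h4 : (Finset.Icc 1 n).card = n := by rw [Nat.card_Icc]; omega
  unfold KInv
  omega

lemma min_lt_min_iff {X Y : Finset ℕ} (hY : Y.Nonempty) :
    X.min < Y.min ↔ ∃ x ∈ X, ∀ y ∈ Y, x < y := by
  constructor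
  · intro h
    have hX : X.Nonempty := by
      by_contra hX
      rw [Finset.not_nonempty_iff_eq_empty.mp hX, Finset.min_empty] at h
      exact not_top_lt h
    refine ⟨X.min' hX, X.min'_mem hX, fun y hy => ?_⟩
    rw [← Finset.coe_min' hX, ← Finset.coe_min' hY] at h
    exact lt_of_lt_of_le (WithTop.coe_lt_coe.mp h) (Finset.min'_le Y y hy)
  · rintro ⟨x, hx, hlt⟩
    refine lt_of_le_of_lt (Finset.min_le hx) ?_
    rw [← Finset.coe_min' hY]
    exact WithTop.coe_lt_coe.mpr (hlt _ (Y.min'_mem hY))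

lemma max_lt_max_iff {X Y : Finset ℕ} (hX : X.Nonempty) :
    X.max < Y.max ↔ ∃ y ∈ Y, ∀ x ∈ X, x < y := by
  constructor
  · intro h
    have hY : Y.Nonempty := by
      by_contra hY
      rw [Finset.not_nonempty_iff_eq_empty.mp hY, Finset.max_empty] at h
      exact not_lt_bot h
    refine ⟨Y.max' hY, Y.max'_mem hY, fun x hx => ?_⟩
    rw [← Finset.coe_max' hX, ← Finset.coe_max' hY] at h
    exact lt_of_le_of_lt (Finset.le_max' X x hx) (WithBot.coe_lt_coe.mp h)
  · rintro ⟨y, hy, hlt⟩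
    refine lt_of_lt_of_le ?_ (Finset.le_max hy)
    rw [← Finset.coe_max' hX]
    exact WithBot.coe_lt_coe.mpr (hlt _ (X.max'_mem hX))

lemma surrounds_iff {A B : Finset ℕ} :
    Surrounds A B ↔ (B \ A).Nonempty ∧ ∃ a1 ∈ A \ B, ∃ a2 ∈ A \ B,
      ∀ b ∈ B \ A, a1 < b ∧ b < a2 := by
  unfold Surrounds
  constructor
  · rintro ⟨hne, hmin, hmax⟩
    obtain ⟨a1, ha1, h1⟩ := (min_lt_min_iff hne).mp hmin
    obtain ⟨a2, ha2, h2⟩ := (max_lt_max_iff hne).mp hmax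
    exact ⟨hne, a1, ha1, a2, ha2, fun b hb => ⟨h1 b hb, h2 b hb⟩⟩
  · rintro ⟨hne, a1, ha1, a2, ha2, h⟩
    exact ⟨hne, (min_lt_min_iff hne).mpr ⟨a1, ha1, fun b hb => (h b hb).1⟩,
      (max_lt_max_iff hne).mpr ⟨a2, ha2, fun b hb => (h b hb).2⟩⟩

lemma surrounds_kInv {n : ℕ} {S T : Finset ℕ}
    (hS : S ⊆ Finset.Icc 1 n) :
    Surrounds (KInv n S) (KInv n T) → Surrounds T S := by
  rw [surrounds_iff, surrounds_iff]
  rintro ⟨hne, x1, hx1, x2, hx2, h⟩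
  obtain ⟨y, hy⟩ := hne
  have hy' := mem_kInv_sdiff.mp hy
  have hx1' := mem_kInv_sdiff.mp hx1
  have hx2' := mem_kInv_sdiff.mp hx2
  refine ⟨⟨n + 1 - y, Finset.mem_sdiff.mpr ⟨hy'.2.1, hy'.2.2⟩⟩,
    n + 1 - x2, Finset.mem_sdiff.mpr ⟨hx2'.2.1, hx2'.2.2⟩,
    n + 1 - x1, Finset.mem_sdiff.mpr ⟨hx1'.2.1, hx1'.2.2⟩, ?_⟩
  intro s hs
  have hsb := Finset.mem_Icc.mp (hS (Finset.mem_sdiff.mp hs).1)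
  have hmem : n + 1 - s ∈ KInv n T \ KInv n S := refl_mem hS hs
  have := h _ hmem
  omega

lemma chordSep_kInv {n : ℕ} {S T : Finset ℕ} (h : ChordSep S T) :
    ChordSep (KInv n S) (KInv n T) := by
  rintro ⟨i, j, k, l, hij, hjk, hkl, hcase⟩
  apply h
  rcases hcase with ⟨hi, hk, hj, hl⟩ | ⟨hi, hk, hj, hl⟩
  · have hi' := mem_kInv_sdiff.mp hi
    have hk' := mem_kInv_sdiff.mp hk
    have hj' := mem_kInv_sdiff.mp hj
    have hl' := mem_kInv_sdiff.mp hl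
    refine ⟨n + 1 - l, n + 1 - k, n + 1 - j, n + 1 - i, by omega, by omega, by omega,
      Or.inl ⟨Finset.mem_sdiff.mpr ⟨hl'.2.1, hl'.2.2⟩, Finset.mem_sdiff.mpr ⟨hj'.2.1, hj'.2.2⟩,
        Finset.mem_sdiff.mpr ⟨hk'.2.1, hk'.2.2⟩, Finset.mem_sdiff.mpr ⟨hi'.2.1, hi'.2.2⟩⟩⟩
  · have hi' := mem_kInv_sdiff.mp hi
    have hk' := mem_kInv_sdiff.mp hk
    have hj' := mem_kInv_sdiff.mp hj
    have hl' := mem_kInv_sdiff.mp hl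
    refine ⟨n + 1 - l, n + 1 - k, n + 1 - j, n + 1 - i, by omega, by omega, by omega,
      Or.inr ⟨Finset.mem_sdiff.mpr ⟨hl'.2.1, hl'.2.2⟩, Finset.mem_sdiff.mpr ⟨hj'.2.1, hj'.2.2⟩,
        Finset.mem_sdiff.mpr ⟨hk'.2.1, hk'.2.2⟩, Finset.mem_sdiff.mpr ⟨hi'.2.1, hi'.2.2⟩⟩⟩

/-- If `S, T ⊆ [n]` are weakly separated, then so are `S*` and `T*`. -/
theorem weakSep_kInv
    (n : ℕ) (hn : 0 < n)
    (S T : Finset ℕ) (hS : S ⊆ Finset.Icc 1 n) (hT : T ⊆ Finset.Icc 1 n)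
    (hws : WeakSep S T) :
    WeakSep (KInv n S) (KInv n T) := by
  obtain ⟨hc, h1, h2⟩ := hws
  have hcS := Finset.card_le_card hS
  have hcT := Finset.card_le_card hT
  have hn' : (Finset.Icc 1 n).card = n := by rw [Nat.card_Icc]; omega
  rw [hn'] at hcS hcT
  refine ⟨chordSep_kInv hc, ?_, ?_⟩
  · intro hsur
    have := h2 (surrounds_kInv hS hsur)
    rw [card_kInv hS, card_kInv hT]
    omega
  · intro hsur
    have := h1 (surrounds_kInv hT hsur)
    rw [card_kInv hS, card_kInv hT]
    omega
end

section
/- Let n be a positive integer, let C ⊆ 2^[n] be a symmetric weakly separated collection, and let S ⊆ [n] be weakly separated from every member of C and weakly separated from S*. Then S* is weakly separated from every member of C, and C ∪ {S, S*} is a symmetric weakly separated collection. -/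
open Finset

/-- A symmetric weakly separated collection in `2^[n]`. -/
def SymmWColl (n : ℕ) (S : Finset (Finset ℕ)) : Prop :=
  (∀ A ∈ S, A ⊆ Finset.Icc 1 n) ∧ (∀ A ∈ S, KInv n A ∈ S) ∧
    ∀ A ∈ S, ∀ B ∈ S, WeakSep A B

lemma kinv_subset (n : ℕ) (A : Finset ℕ) : KInv n A ⊆ Finset.Icc 1 n :=
  filter_subset _ _

lemma mem_kinv {n : ℕ} {A : Finset ℕ} {i : ℕ} :
    i ∈ KInv n A ↔ i ∈ Finset.Icc 1 n ∧ n + 1 - i ∉ A := by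
  simp only [KInv, mem_filter]

lemma kinv_kinv {n : ℕ} {A : Finset ℕ} (hA : A ⊆ Finset.Icc 1 n) :
    KInv n (KInv n A) = A := by
  ext i
  simp only [mem_kinv, mem_Icc]
  constructor
  · rintro ⟨⟨h1, h2⟩, h3⟩
    by_contra hiA
    exact h3 ⟨⟨by omega, by omega⟩, by rw [show n+1-(n+1-i) = i by omega]; exact hiA⟩
  · intro hiA
    have hi := mem_Icc.mp (hA hiA)
    refine ⟨⟨hi.1, hi.2⟩, ?_⟩
    rintro ⟨⟨h1, h2⟩, h3⟩
    exact h3 (by rw [show n+1-(n+1-i) = i by omega]; exact hiA)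

lemma mem_kinv_sdiff {n : ℕ} {A B : Finset ℕ} {x : ℕ} :
    x ∈ KInv n A \ KInv n B ↔ x ∈ Finset.Icc 1 n ∧ n + 1 - x ∈ B \ A := by
  simp only [mem_sdiff, mem_kinv]
  tauto

lemma kinv_sdiff {n : ℕ} {A B : Finset ℕ} (hB : B ⊆ Finset.Icc 1 n) :
    KInv n A \ KInv n B = (B \ A).image (fun x => n + 1 - x) := by
  ext i
  rw [mem_kinv_sdiff]
  simp only [mem_image, mem_sdiff, mem_Icc]
  constructor
  · rintro ⟨⟨h1, h2⟩, hB', hA'⟩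
    exact ⟨n + 1 - i, ⟨hB', hA'⟩, by omega⟩
  · rintro ⟨x, ⟨hxB, hxA⟩, rfl⟩
    have hx := mem_Icc.mp (hB hxB)
    have hh : n + 1 - (n + 1 - x) = x := by omega
    exact ⟨⟨by omega, by omega⟩, by rw [hh]; exact hxB, by rw [hh]; exact hxA⟩

lemma kinv_icc (n : ℕ) : KInv n (Finset.Icc 1 n) = ∅ := by
  ext i
  simp only [mem_kinv, mem_Icc, notMem_empty, iff_false]
  rintro ⟨⟨h1, h2⟩, h3⟩
  exact h3 ⟨by omega, by omega⟩

lemma card_kinv {n : ℕ} {A : Finset ℕ} (hA : A ⊆ Finset.Icc 1 n) :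
    (KInv n A).card = n - A.card := by
  have h := kinv_sdiff (n := n) (A := A) (B := Finset.Icc 1 n) (Finset.Subset.refl _)
  rw [kinv_icc, sdiff_empty] at h
  have hinj : Set.InjOn (fun x => n + 1 - x) ↑(Finset.Icc 1 n \ A) := by
    intro x hx y hy hxy
    simp only [coe_sdiff, Set.mem_diff, mem_coe, mem_Icc] at hx hy
    have hxy' : n + 1 - x = n + 1 - y := hxy
    omega
  rw [h, card_image_of_injOn hinj, card_sdiff_of_subset hA, Nat.card_Icc]
  omega

lemma min'_image_rho {n : ℕ} {X : Finset ℕ} (hX : X.Nonempty) (hsub : X ⊆ Finset.Icc 1 n) :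
    (X.image (fun x => n + 1 - x)).min' (hX.image _) = n + 1 - X.max' hX := by
  apply le_antisymm
  · exact min'_le _ _ (mem_image_of_mem _ (X.max'_mem hX))
  · apply le_min'
    intro y hy
    obtain ⟨x, hx, rfl⟩ := mem_image.mp hy
    have := le_max' X x hx
    omega

lemma max'_image_rho {n : ℕ} {X : Finset ℕ} (hX : X.Nonempty) (hsub : X ⊆ Finset.Icc 1 n) :
    (X.image (fun x => n + 1 - x)).max' (hX.image _) = n + 1 - X.min' hX := by
  apply le_antisymm
  · apply max'_le
    intro y hy
    obtain ⟨x, hx, rfl⟩ := mem_image.mp hy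
    have := min'_le X x hx
    omega
  · exact le_max' _ _ (mem_image_of_mem _ (X.min'_mem hX))

lemma surrounds_kinv {n : ℕ} {A B : Finset ℕ} (hA : A ⊆ Finset.Icc 1 n)
    (hB : B ⊆ Finset.Icc 1 n) :
    Surrounds (KInv n A) (KInv n B) → Surrounds B A := by
  rintro ⟨hne, h1, h2⟩
  rw [kinv_sdiff hA] at hne h2
  rw [kinv_sdiff hA] at h1
  rw [kinv_sdiff hB] at h1 h2
  have hAB : (A \ B).Nonempty := by rwa [image_nonempty] at hne
  have hBA : (B \ A).Nonempty := by
    by_contra h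
    rw [not_nonempty_iff_eq_empty] at h
    rw [h] at h1
    simp at h1
  have hABs : A \ B ⊆ Finset.Icc 1 n := sdiff_subset.trans hA
  have hBAs : B \ A ⊆ Finset.Icc 1 n := sdiff_subset.trans hB
  rw [← coe_min' (hBA.image _), ← coe_min' (hAB.image _), WithTop.coe_lt_coe,
    min'_image_rho hBA hBAs, min'_image_rho hAB hABs] at h1
  rw [← coe_max' (hAB.image _), ← coe_max' (hBA.image _), WithBot.coe_lt_coe,
    max'_image_rho hAB hABs, max'_image_rho hBA hBAs] at h2
  have hmaxA := mem_Icc.mp (hABs ((A \ B).max'_mem hAB))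
  have hmaxB := mem_Icc.mp (hBAs ((B \ A).max'_mem hBA))
  have hminA := mem_Icc.mp (hABs ((A \ B).min'_mem hAB))
  have hminB := mem_Icc.mp (hBAs ((B \ A).min'_mem hBA))
  refine ⟨hAB, ?_, ?_⟩
  · rw [← coe_min' hBA, ← coe_min' hAB, WithTop.coe_lt_coe]
    omega
  · rw [← coe_max' hAB, ← coe_max' hBA, WithBot.coe_lt_coe]
    omega

lemma chordSep_kinv {n : ℕ} {A B : Finset ℕ}
    (h : ChordSep A B) : ChordSep (KInv n A) (KInv n B) := by
  rintro ⟨i, j, k, l, hij, hjk, hkl, hmem⟩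
  apply h
  rcases hmem with ⟨hi, hk, hj, hl⟩ | ⟨hi, hk, hj, hl⟩
  · rw [mem_kinv_sdiff] at hi hk
    rw [show KInv n B \ KInv n A = KInv n B \ KInv n A from rfl, mem_kinv_sdiff] at hj hl
    obtain ⟨hi1, hi2⟩ := hi; obtain ⟨hk1, hk2⟩ := hk
    obtain ⟨hj1, hj2⟩ := hj; obtain ⟨hl1, hl2⟩ := hl
    rw [mem_Icc] at hi1 hj1 hk1 hl1
    exact ⟨n+1-l, n+1-k, n+1-j, n+1-i, by omega, by omega, by omega,
      Or.inl ⟨hl2, hj2, hk2, hi2⟩⟩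
  · rw [mem_kinv_sdiff] at hj hl
    rw [mem_kinv_sdiff] at hi hk
    obtain ⟨hi1, hi2⟩ := hi; obtain ⟨hk1, hk2⟩ := hk
    obtain ⟨hj1, hj2⟩ := hj; obtain ⟨hl1, hl2⟩ := hl
    rw [mem_Icc] at hi1 hj1 hk1 hl1
    exact ⟨n+1-l, n+1-k, n+1-j, n+1-i, by omega, by omega, by omega,
      Or.inr ⟨hl2, hj2, hk2, hi2⟩⟩

lemma weakSep_kinv {n : ℕ} {A B : Finset ℕ} (hA : A ⊆ Finset.Icc 1 n)
    (hB : B ⊆ Finset.Icc 1 n) (h : WeakSep A B) :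
    WeakSep (KInv n A) (KInv n B) := by
  obtain ⟨hc, h1, h2⟩ := h
  have cA : A.card ≤ n := by
    have := card_le_card hA; simpa [Nat.card_Icc] using this
  have cB : B.card ≤ n := by
    have := card_le_card hB; simpa [Nat.card_Icc] using this
  refine ⟨chordSep_kinv hc, ?_, ?_⟩
  · intro hs
    have := h2 (surrounds_kinv hA hB hs)
    rw [card_kinv hA, card_kinv hB]
    omega
  · intro hs
    have := h1 (surrounds_kinv hB hA hs)
    rw [card_kinv hA, card_kinv hB]
    omega

lemma weakSep_symm {A B : Finset ℕ} (h : WeakSep A B) : WeakSep B A := by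
  obtain ⟨hc, h1, h2⟩ := h
  refine ⟨?_, h2, h1⟩
  rintro ⟨i, j, k, l, hij, hjk, hkl, hm⟩
  exact hc ⟨i, j, k, l, hij, hjk, hkl, hm.symm⟩

lemma weakSep_refl (A : Finset ℕ) : WeakSep A A := by
  refine ⟨?_, ?_, ?_⟩ <;> simp [ChordSep, Surrounds]

/-- If `C` is a symmetric weakly separated collection and `S ⊆ [n]` is weakly
separated from every member of `C` and from `S*`, then `S*` is weakly
separated from every member of `C` and `C ∪ {S, S*}` is a symmetric weakly
separated collection. -/
theorem symmWColl_insert_pair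
    (n : ℕ) (hn : 0 < n)
    (C : Finset (Finset ℕ)) (hC : SymmWColl n C)
    (S : Finset ℕ) (hS : S ⊆ Finset.Icc 1 n)
    (hsep : ∀ A ∈ C, WeakSep S A) (hself : WeakSep S (KInv n S)) :
    (∀ A ∈ C, WeakSep (KInv n S) A) ∧ SymmWColl n (C ∪ {S, KInv n S}) := by
  obtain ⟨hsub, hsymm, hpair⟩ := hC
  have key : ∀ A ∈ C, WeakSep (KInv n S) A := by
    intro A hAC
    have hKA := hsymm A hAC
    have h := weakSep_kinv hS (kinv_subset n A) (hsep _ hKA)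
    rwa [kinv_kinv (hsub A hAC)] at h
  refine ⟨key, ?_, ?_, ?_⟩
  · intro A hA
    simp only [mem_union, mem_insert, mem_singleton] at hA
    rcases hA with h | h | h
    · exact hsub A h
    · exact h ▸ hS
    · exact h ▸ kinv_subset n S
  · intro A hA
    simp only [mem_union, mem_insert, mem_singleton] at hA ⊢
    rcases hA with h | h | h
    · exact Or.inl (hsymm A h)
    · subst h; exact Or.inr (Or.inr rfl)
    · subst h; exact Or.inr (Or.inl (kinv_kinv hS))
  · intro A hA B hB
    simp only [mem_union, mem_insert, mem_singleton] at hA hB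
    rcases hA with hA | hA | hA <;> rcases hB with hB | hB | hB
    · exact hpair A hA B hB
    · subst hB; exact weakSep_symm (hsep A hA)
    · subst hB; exact weakSep_symm (key A hA)
    · subst hA; exact hsep B hB
    · subst hA; subst hB; exact weakSep_refl _
    · subst hA; subst hB; exact hself
    · subst hA; exact key B hB
    · subst hA; subst hB; exact weakSep_symm hself
    · subst hA; subst hB; exact weakSep_refl _
end

section
/- Let n be an odd positive integer, let z := (n+1)/2, and let A ⊆ [n] with z ∉ A. If A and A* are weakly separated, then |A| ≤ (n−1)/2 (equivalently, |A*| ≥ (n+1)/2). -/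
open Finset

/-- For odd `n` and `z = (n+1)/2`, if `A ⊆ [n]` with `z ∉ A` is weakly
separated from `A*`, then `|A| ≤ (n−1)/2`. -/
theorem card_le_of_weakSep_kInv_odd
    (n : ℕ) (hn : 0 < n) (hodd : Odd n)
    (A : Finset ℕ) (hA : A ⊆ Finset.Icc 1 n) (hz : (n + 1) / 2 ∉ A)
    (hws : WeakSep A (KInv n A)) :
    A.card ≤ (n - 1) / 2 := by
  obtain ⟨k, hk⟩ := hodd
  set B := KInv n A with hB
  -- cardinality of B
  have hAcard : A.card ≤ n := by
    have := Finset.card_le_card hA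
    simpa [Nat.card_Icc] using this
  have hBcard : B.card = n - A.card := by
    have himg : (Finset.Icc 1 n).filter (fun i => n + 1 - i ∈ A)
        = A.image (fun j => n + 1 - j) := by
      ext i
      simp only [mem_filter, mem_image, mem_Icc]
      constructor
      · rintro ⟨⟨h1, h2⟩, h3⟩
        exact ⟨n + 1 - i, h3, by omega⟩
      · rintro ⟨j, hj, rfl⟩
        have hj' := hA hj
        simp only [mem_Icc] at hj'
        refine ⟨⟨by omega, by omega⟩, ?_⟩
        have heq : n + 1 - (n + 1 - j) = j := by omega
        rw [heq]; exact hj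
    have hcardimg : (A.image (fun j => n + 1 - j)).card = A.card := by
      apply Finset.card_image_of_injOn
      intro a ha b hb hab
      have ha' := hA ha; have hb' := hA hb
      simp only [mem_Icc] at ha' hb'
      have hab' : n + 1 - a = n + 1 - b := hab
      omega
    have hsum := Finset.card_filter_add_card_filter_not
      (s := Finset.Icc 1 n) (p := fun i => n + 1 - i ∈ A)
    rw [himg, hcardimg, Nat.card_Icc] at hsum
    have : B.card = ((Finset.Icc 1 n).filter (fun i => ¬ n + 1 - i ∈ A)).card := rfl
    omega
  -- membership characterizations
  have hD : ∀ i, i ∈ A \ B ↔ i ∈ A ∧ n + 1 - i ∈ A := by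
    intro i
    simp only [mem_sdiff, hB, KInv, mem_filter, not_and, not_not]
    constructor
    · rintro ⟨hi, h⟩
      exact ⟨hi, h (hA hi)⟩
    · rintro ⟨hi, h⟩
      exact ⟨hi, fun _ => h⟩
  have hE : ∀ i, i ∈ B \ A ↔ (1 ≤ i ∧ i ≤ n) ∧ i ∉ A ∧ n + 1 - i ∉ A := by
    intro i
    simp only [mem_sdiff, hB, KInv, mem_filter, mem_Icc]
    tauto
  -- z = k+1 is in B \ A
  have hzval : (n + 1) / 2 = k + 1 := by omega
  have hzE : k + 1 ∈ B \ A := by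
    rw [hE]
    have h1 : k + 1 ∉ A := by rw [hzval] at hz; exact hz
    have h2 : n + 1 - (k + 1) = k + 1 := by omega
    refine ⟨⟨by omega, by omega⟩, h1, ?_⟩
    rw [h2]; exact h1
  have hEne : (B \ A).Nonempty := ⟨k + 1, hzE⟩
  -- if A \ B is empty
  by_cases hDne : (A \ B).Nonempty
  swap
  · have hsub : A ⊆ B := by
      rw [Finset.not_nonempty_iff_eq_empty, Finset.sdiff_eq_empty_iff_subset] at hDne
      exact hDne
    have := Finset.card_le_card hsub
    omega
  -- min/max facts
  set dmin := (A \ B).min' hDne with hdmin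
  set dmax := (A \ B).max' hDne with hdmax
  set emin := (B \ A).min' hEne with hemin
  set emax := (B \ A).max' hEne with hemax
  have hDsym : ∀ i ∈ A \ B, n + 1 - i ∈ A \ B := by
    intro i hi
    rw [hD] at hi ⊢
    have hi' := hA hi.1
    simp only [mem_Icc] at hi'
    have : n + 1 - (n + 1 - i) = i := by omega
    refine ⟨hi.2, ?_⟩
    rw [this]; exact hi.1
  have hEsym : ∀ i ∈ B \ A, n + 1 - i ∈ B \ A := by
    intro i hi
    rw [hE] at hi ⊢
    obtain ⟨⟨h1, h2⟩, h3, h4⟩ := hi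
    have : n + 1 - (n + 1 - i) = i := by omega
    refine ⟨⟨by omega, by omega⟩, h4, ?_⟩
    rw [this]; exact h3
  have hDminmax : dmin + dmax = n + 1 := by
    have h1 := Finset.le_max' _ _ (hDsym dmin (Finset.min'_mem _ hDne))
    have h2 := Finset.min'_le _ _ (hDsym dmax (Finset.max'_mem _ hDne))
    have h3 : (1 : ℕ) ≤ dmin := by
      have := hA ((Finset.mem_sdiff.mp (Finset.min'_mem _ hDne)).1)
      simp only [mem_Icc] at this; exact this.1
    have h4 : dmax ≤ n := by
      have := hA ((Finset.mem_sdiff.mp (Finset.max'_mem _ hDne)).1)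
      simp only [mem_Icc] at this; exact this.2
    omega
  have hEminmax : emin + emax = n + 1 := by
    have h1 := Finset.le_max' _ _ (hEsym emin (Finset.min'_mem _ hEne))
    have h2 := Finset.min'_le _ _ (hEsym emax (Finset.max'_mem _ hEne))
    have h3 : (1 : ℕ) ≤ emin := ((hE emin).mp (Finset.min'_mem _ hEne)).1.1
    have h4 : emax ≤ n := ((hE emax).mp (Finset.max'_mem _ hEne)).1.2
    omega
  have hdminA : dmin ∈ A := (Finset.mem_sdiff.mp (Finset.min'_mem _ hDne)).1
  have hdle : dmin ≤ dmax := Finset.min'_le _ _ (Finset.max'_mem _ hDne)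
  have hele : emin ≤ emax := Finset.min'_le _ _ (Finset.max'_mem _ hEne)
  have hdminz : dmin ≠ k + 1 := by
    intro h; rw [h] at hdminA
    exact (Finset.mem_sdiff.mp hzE).2 hdminA
  have hdminlt : dmin < k + 1 := by omega
  have hdmaxgt : k + 1 < dmax := by omega
  rcases lt_trichotomy dmin emin with hlt | heq | hgt
  · -- A surrounds B
    have hsur : Surrounds A B := by
      refine ⟨hEne, ?_, ?_⟩
      · rw [← Finset.coe_min' hDne, ← Finset.coe_min' hEne]
        exact_mod_cast hlt
      · rw [← Finset.coe_max' hDne, ← Finset.coe_max' hEne]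
        exact_mod_cast (by omega : emax < dmax)
    have := hws.2.1 hsur
    omega
  · exfalso
    have h1 := hdminA
    have h2 : emin ∉ A := ((hE emin).mp (Finset.min'_mem _ hEne)).2.1
    rw [heq] at h1; exact h2 h1
  · -- chord separation violation
    exfalso
    apply hws.1
    refine ⟨emin, dmin, k + 1, dmax, hgt, hdminlt, hdmaxgt, Or.inr ?_⟩
    refine ⟨Finset.min'_mem _ hEne, hzE, Finset.min'_mem _ hDne, Finset.max'_mem _ hDne⟩
end

section
/- Let n be a positive integer, let A, B ⊆ [n], and let z ∈ [n] with z ∉ A and z ∉ B. If A and B ∪ {z} are weakly separated and |A| ≤ |B|, then A and B are weakly separated. -/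
open Finset

/-- If `z ∉ A`, `z ∉ B`, `A` and `B ∪ {z}` are weakly separated, and
`|A| ≤ |B|`, then `A` and `B` are weakly separated. -/
theorem weakSep_of_weakSep_insert
    (n : ℕ) (hn : 0 < n)
    (A B : Finset ℕ) (hA : A ⊆ Finset.Icc 1 n) (hB : B ⊆ Finset.Icc 1 n)
    (z : ℕ) (hz : z ∈ Finset.Icc 1 n) (hzA : z ∉ A) (hzB : z ∉ B)
    (hws : WeakSep A (insert z B)) (hcard : A.card ≤ B.card) :
    WeakSep A B := by
  obtain ⟨hcs, -, hsur⟩ := hws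
  have hd1 : A \ insert z B = A \ B := by
    ext a
    simp only [Finset.mem_sdiff, Finset.mem_insert]
    constructor
    · rintro ⟨ha, h⟩; exact ⟨ha, fun hb => h (Or.inr hb)⟩
    · rintro ⟨ha, h⟩
      exact ⟨ha, by rintro (rfl | hb); exact hzA ha; exact h hb⟩
  have hd2 : insert z B \ A = insert z (B \ A) := by
    ext a
    simp only [Finset.mem_sdiff, Finset.mem_insert]
    constructor
    · rintro ⟨rfl | hb, ha⟩
      · exact Or.inl rfl
      · exact Or.inr ⟨hb, ha⟩
    · rintro (rfl | ⟨hb, ha⟩)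
      · exact ⟨Or.inl rfl, hzA⟩
      · exact ⟨Or.inr hb, ha⟩
  refine ⟨?_, fun _ => hcard, fun hS => ?_⟩
  · intro ⟨i, j, k, l, h1, h2, h3, hm⟩
    apply hcs
    refine ⟨i, j, k, l, h1, h2, h3, ?_⟩
    rw [hd1, hd2]
    have hins : ∀ a, a ∈ B \ A → a ∈ insert z (B \ A) := fun a ha =>
      Finset.mem_insert_of_mem ha
    rcases hm with ⟨hi, hk, hj, hl⟩ | ⟨hi, hk, hj, hl⟩
    · exact Or.inl ⟨hi, hk, hins _ hj, hins _ hl⟩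
    · exact Or.inr ⟨hins _ hi, hins _ hk, hj, hl⟩
  · obtain ⟨hne, hmin, hmax⟩ := hS
    have : (insert z B).card ≤ A.card := by
      apply hsur
      refine ⟨?_, ?_, ?_⟩
      · rw [hd1]; exact hne
      · rw [hd2, hd1, Finset.min_insert]
        exact lt_of_le_of_lt (min_le_right _ _) hmin
      · rw [hd2, hd1, Finset.max_insert]
        exact lt_of_lt_of_le hmax (le_max_right _ _)
    rw [Finset.card_insert_of_notMem hzB] at this
    omega
end
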